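/- The free Grigorchuk group 𝒢 contains a nonabelian free subgroup of rank 2: there exists an injective group homomorphism from FreeGroup Bool into PresentedGroup rels. -/

import Mathlib

/-- The relations of the free Grigorchuk group
`𝒢 = ⟨a, b, c, d ∣ a² = b² = c² = d² = bcd = 1⟩`. -/
def grigRels : Set (FreeGroup (Fin 4)) :=
  {(FreeGroup.of 0) ^ 2, (FreeGroup.of 1) ^ 2, (FreeGroup.of 2) ^ 2, (FreeGroup.of 3) ^ 2,
    FreeGroup.of 1 * FreeGroup.of 2 * FreeGroup.of 3}

namespace GrigFreeAux

open Monoid.CoprodI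

/-- The Klein four group. -/
abbrev V : Type := Multiplicative (ZMod 2 × ZMod 2)

/-- Constant family, both factors are `V`. -/
abbrev Hfam : Bool → Type := fun _ => V

lemma vinv : ∀ v : V, v⁻¹ = v := by decide

lemma vsq : ∀ v : V, v * v = 1 := by decide

/-- Generator of the first factor. -/
def g : V := Multiplicative.ofAdd (1, 0)

/-- The two letters in the second factor. -/
def L : Bool → V := fun b => Multiplicative.ofAdd (if b then ((1 : ZMod 2), (0 : ZMod 2)) else (0, 1))

lemma g_ne_one : g ≠ 1 := by decide
lemma L_ne_one (b : Bool) : L b ≠ 1 := by cases b <;> decide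
lemma L_inj : Function.Injective L := by decide

lemma prepend {i : Bool} (p : Hfam i) (hp : p ≠ 1) (w : Word Hfam) (h1 : w.fstIdx ≠ some i) :
    (of p • w).toList = ⟨i, p⟩ :: w.toList := by
  rw [← Word.cons_eq_smul (h1 := h1) (h2 := hp)]
  rfl

lemma fstIdx_of_toList {w : Word Hfam} {i : Bool} {p : Hfam i} {l}
    (h : w.toList = ⟨i, p⟩ :: l) : w.fstIdx = some i := by
  simp [Word.fstIdx, h]

lemma merge {i : Bool} (p q : Hfam i) (w : Word Hfam) :
    of (M := Hfam) (i := i) p • of (M := Hfam) (i := i) q • w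
      = of (M := Hfam) (i := i) (p * q) • w := by
  rw [← mul_smul, ← MonoidHom.map_mul]

lemma core2 {i j : Bool} (hij : i ≠ j) (p : V) (hp : p ≠ 1) (w' : Word Hfam)
    (hI : w'.fstIdx ≠ some j)
    (hno : ∀ (h' : Hfam i) l, w'.toList = ⟨i, h'⟩ :: l → p * h' ≠ 1) :
    (of (M := Hfam) (i := i) p • w').fstIdx = some i := by
  induction w' using Word.consRecOn with
  | empty =>
    have h1 : (Word.empty : Word Hfam).fstIdx ≠ some i := by
      simp [Word.fstIdx, Word.empty]
    exact fstIdx_of_toList (prepend p hp _ h1)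
  | cons k' h' w'' hI' hne' ih =>
    clear ih
    have hk' : k' = i := by
      have hkj : k' ≠ j := by
        intro hkj
        exact hI (by simp [Word.fstIdx, Word.cons, hkj])
      revert hkj hij; cases i <;> cases j <;> cases k' <;> simp
    subst hk'
    have hph' : p * h' ≠ 1 := hno h' w''.toList (by simp [Word.cons])
    rw [Word.cons_eq_smul, merge]
    exact fstIdx_of_toList (prepend (p * h') hph' w'' hI')

lemma core {i j : Bool} (hij : i ≠ j) (p q : V) (hp : p ≠ 1) (hq : q ≠ 1)
    (w : Word Hfam) (hw : w.toList.take 2 ≠ [⟨j, q⁻¹⟩, ⟨i, p⁻¹⟩]) :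
    (of (M := Hfam) (i := i) p • of (M := Hfam) (i := j) q • w).fstIdx = some i := by
  induction w using Word.consRecOn with
  | empty =>
    have h1 : (Word.empty : Word Hfam).fstIdx ≠ some j := by
      simp [Word.fstIdx, Word.empty]
    have l1 := prepend (i := j) q hq _ h1
    have h2 : (of (M := Hfam) (i := j) q • (Word.empty : Word Hfam)).fstIdx ≠ some i := by
      rw [fstIdx_of_toList l1]
      simpa using hij.symm
    exact fstIdx_of_toList (prepend p hp _ h2)
  | cons k h w' hI hne ih =>
    clear ih
    by_cases hk : k = j
    · subst hk
      rw [Word.cons_eq_smul, merge]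
      by_cases hqh : q * h = 1
      · rw [hqh, MonoidHom.map_one, one_smul]
        apply core2 hij p hp w' hI
        intro h' l hl hph1
        apply hw
        have hq' : h = q⁻¹ := by
          rw [eq_inv_iff_mul_eq_one, mul_comm]; exact hqh
        have hp' : h' = p⁻¹ := by
          rw [eq_inv_iff_mul_eq_one, mul_comm]; exact hph1
        simp [Word.cons, hl, hq', hp']
      · have l1 := prepend (q * h) hqh w' hI
        have h2 : (of (M := Hfam) (i := k) (q * h) • w').fstIdx ≠ some i := by
          rw [fstIdx_of_toList l1]
          simpa using hij.symm
        exact fstIdx_of_toList (prepend p hp _ h2)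
    · have hfw : (Word.cons h w' hI hne).fstIdx ≠ some j := by
        simp [Word.fstIdx, Word.cons, hk]
      have l1 := prepend (i := j) q hq _ hfw
      have h2 : (of (M := Hfam) (i := j) q • Word.cons h w' hI hne).fstIdx ≠ some i := by
        rw [fstIdx_of_toList l1]
        simpa using hij.symm
      exact fstIdx_of_toList (prepend p hp _ h2)

lemma key {i j : Bool} (hij : i ≠ j) (p q : V) (hp : p ≠ 1) (hq : q ≠ 1)
    (w : Word Hfam) (hw : w.toList.take 2 ≠ [⟨j, q⁻¹⟩, ⟨i, p⁻¹⟩]) :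
    ((of (M := Hfam) (i := i) p * of (M := Hfam) (i := j) q *
        of (M := Hfam) (i := i) p * of (M := Hfam) (i := j) q) • w).toList.take 2 =
      [⟨i, p⟩, ⟨j, q⟩] := by
  have hcore := core hij p q hp hq w hw
  rw [mul_smul, mul_smul, mul_smul]
  have h1 : (of (M := Hfam) (i := i) p • of (M := Hfam) (i := j) q • w).fstIdx ≠ some j := by
    rw [hcore]; simpa using hij
  have l3 := prepend (i := j) q hq _ h1
  have h2 : (of (M := Hfam) (i := j) q •
      (of (M := Hfam) (i := i) p • of (M := Hfam) (i := j) q • w)).fstIdx ≠ some i := by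
    rw [fstIdx_of_toList l3]
    simpa using hij.symm
  have l4 := prepend (i := i) p hp _ h2
  rw [l4, l3]
  rfl

/-- The two candidate free generators in the free product. -/
def a : Bool → Monoid.CoprodI Hfam := fun b =>
  of (M := Hfam) (i := false) g * of (M := Hfam) (i := true) (L b) *
    of (M := Hfam) (i := false) g * of (M := Hfam) (i := true) (L b)

/-- Ping-pong set for `a b`. -/
def X : Bool → Set (Word Hfam) := fun b =>
  {w | w.toList.take 2 = [⟨false, g⟩, ⟨true, L b⟩]}

/-- Ping-pong set for `(a b)⁻¹`. -/
def Y : Bool → Set (Word Hfam) := fun b =>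
  {w | w.toList.take 2 = [⟨true, L b⟩, ⟨false, g⟩]}

/-- A witness word in `X b`. -/
def wit (b : Bool) : Word Hfam :=
  Word.cons (i := false) g
    (Word.cons (i := true) (L b) Word.empty (by simp [Word.fstIdx, Word.empty]) (L_ne_one b))
    (by simp [Word.fstIdx, Word.cons]) g_ne_one

lemma lift_a_injective : Function.Injective (FreeGroup.lift a) := by
  apply FreeGroup.injective_lift_of_ping_pong a X Y
  · intro b
    exact ⟨wit b, by simp [X, wit, Word.cons]⟩
  · intro b b' hbb'
    simp only [Function.onFun]
    rw [Set.disjoint_left]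
    intro w hw hw'
    apply hbb'
    apply L_inj
    have := hw.symm.trans hw'
    simpa [X] using this
  · intro b b' hbb'
    simp only [Function.onFun]
    rw [Set.disjoint_left]
    intro w hw hw'
    apply hbb'
    apply L_inj
    have := hw.symm.trans hw'
    simpa [Y] using this
  · intro b b'
    rw [Set.disjoint_left]
    intro w hw hw'
    have := hw.symm.trans hw'
    simp [X, Y] at this
  · intro b w hw
    rw [Set.mem_smul_set] at hw
    obtain ⟨w', hw', rfl⟩ := hw
    have hw2 : w'.toList.take 2 ≠ [⟨true, (L b)⁻¹⟩, ⟨false, g⁻¹⟩] := by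
      rw [vinv, vinv]
      exact hw'
    have := key (i := false) (j := true) (by simp) g (L b) g_ne_one (L_ne_one b) w' hw2
    simpa [X, a] using this
  · intro b w hw
    rw [Set.mem_smul_set] at hw
    obtain ⟨w', hw', rfl⟩ := hw
    have hinv : (a b)⁻¹ = of (M := Hfam) (i := true) (L b) * of (M := Hfam) (i := false) g *
        of (M := Hfam) (i := true) (L b) * of (M := Hfam) (i := false) g := by
      simp only [a, mul_inv_rev, ← MonoidHom.map_inv, vinv, mul_assoc]
    have hw2 : w'.toList.take 2 ≠ [⟨false, g⁻¹⟩, ⟨true, (L b)⁻¹⟩] := by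
      rw [vinv, vinv]
      exact hw'
    have hkey := key (i := true) (j := false) (by simp) (L b) g (L_ne_one b) g_ne_one w' hw2
    have h3 : a⁻¹ b = (a b)⁻¹ := rfl
    rw [h3, hinv]
    simpa [Y] using hkey

/-- The image family sending the four generators into the free product. -/
def f4 : Fin 4 → Monoid.CoprodI Hfam
  | 0 => of (M := Hfam) (i := false) g
  | 1 => of (M := Hfam) (i := true) (L true)
  | 2 => of (M := Hfam) (i := true) (L false)
  | 3 => of (M := Hfam) (i := true) (L true * L false)

lemma hrels : ∀ r ∈ grigRels, FreeGroup.lift f4 r = 1 := by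
  have sq : ∀ (i : Bool) (v : V), (of (M := Hfam) (i := i) v) ^ 2 = 1 := by
    intro i v
    rw [sq, ← MonoidHom.map_mul, vsq v, MonoidHom.map_one]
  intro r hr
  rcases hr with h | h | h | h | h <;> subst h <;>
    simp only [map_mul, map_pow, FreeGroup.lift_apply_of]
  · exact sq _ _
  · exact sq _ _
  · exact sq _ _
  · exact sq _ _
  · show f4 1 * f4 2 * f4 3 = 1
    rw [show f4 1 = of (M := Hfam) (i := true) (L true) from rfl,
      show f4 2 = of (M := Hfam) (i := true) (L false) from rfl,
      show f4 3 = of (M := Hfam) (i := true) (L true * L false) from rfl,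
      ← MonoidHom.map_mul, ← MonoidHom.map_mul, vsq (L true * L false), MonoidHom.map_one]

/-- The homomorphism from the free Grigorchuk group to the free product. -/
def ψ : PresentedGroup grigRels →* Monoid.CoprodI Hfam :=
  PresentedGroup.toGroup hrels

/-- Words in the generators of `𝒢` mapping to the free generators. -/
def W : Bool → PresentedGroup grigRels := fun b =>
  PresentedGroup.of 0 * PresentedGroup.of (if b then (1 : Fin 4) else 2) *
    PresentedGroup.of 0 * PresentedGroup.of (if b then (1 : Fin 4) else 2)

/-- The candidate embedding of the free group of rank two. -/
def ι : FreeGroup Bool →* PresentedGroup grigRels := FreeGroup.lift W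

lemma hcomp : ψ.comp ι = FreeGroup.lift a := by
  apply FreeGroup.ext_hom
  intro b
  cases b <;>
    simp only [MonoidHom.comp_apply, ι, FreeGroup.lift_apply_of, W, map_mul, ψ,
      PresentedGroup.toGroup.of, if_true, if_false, Bool.cond_true, Bool.cond_false] <;>
    rfl

end GrigFreeAux

/-- The free Grigorchuk group contains a nonabelian free subgroup of rank 2: there is an
injective group homomorphism from the free group on two generators into `𝒢`. -/
theorem freeGrigorchukGroup_contains_free :
    ∃ φ : FreeGroup Bool →* PresentedGroup grigRels, Function.Injective φ := by
  refine ⟨GrigFreeAux.ι, ?_⟩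
  have h : Function.Injective (GrigFreeAux.ψ.comp GrigFreeAux.ι) := by
    rw [GrigFreeAux.hcomp]
    exact GrigFreeAux.lift_a_injective
  exact Function.Injective.of_comp h
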